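/- Let α: ℝ³ → M₄(ℝ) be as for the Heisenberg projective structure (rows (0,x₁,0,0), (x₁,0,0,0), (x₂,−x₂,−x₁,0), (x₃,x₃,−x₁,x₁)) and define the dual action Φ*(x)v = −α(x)ᵀv on ℝ⁴ and dual curvature κ*(x,y)v = −(2(x₁y₂−x₂y₁)E₄₂)ᵀv. Define S⁰ = {v : κ*(x,y)v = 0 ∀x,y} and Sᵏ = {v ∈ Sᵏ⁻¹ : Φ*(x)v ∈ Sᵏ⁻¹ ∀x}. Then S⁰ = {(v₁,v₂,v₃,0)} and this subspace is invariant under all Φ*(x), so Sᵏ = {(v₁,v₂,v₃,0) : vᵢ ∈ ℝ} for all k ≥ 0. -/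

import Mathlib

open Matrix

noncomputable section

/-- The extension α of the invariant projective structure on the Heisenberg group. -/
def αH (x : Fin 3 → ℝ) : Matrix (Fin 4) (Fin 4) ℝ :=
  !![0, x 0, 0, 0;
     x 0, 0, 0, 0;
     x 1, -(x 1), -(x 0), 0;
     x 2, x 2, -(x 0), x 0]

/-- The curvature κ(x,y) = 2(x₁y₂ − x₂y₁)E₄₂. -/
def κH (x y : Fin 3 → ℝ) : Matrix (Fin 4) (Fin 4) ℝ :=
  (2 * (x 0 * y 1 - x 1 * y 0)) • Matrix.single (3 : Fin 4) (1 : Fin 4) (1 : ℝ)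

/-- The dual action Φ*(x)v = −α(x)ᵀ v. -/
def Φdual (x : Fin 3 → ℝ) (v : Fin 4 → ℝ) : Fin 4 → ℝ := -((αH x)ᵀ.mulVec v)

/-- The dual curvature κ*(x,y)v = −κ(x,y)ᵀ v. -/
def κdual (x y : Fin 3 → ℝ) (v : Fin 4 → ℝ) : Fin 4 → ℝ := -((κH x y)ᵀ.mulVec v)

/-- The sets S⁰ ⊇ S¹ ⊇ S² ⊇ ⋯ for the dual tractor connection. -/
def S15 : ℕ → Set (Fin 4 → ℝ)
  | 0 => {v | ∀ x y : Fin 3 → ℝ, κdual x y v = 0}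
  | (k + 1) => {v | v ∈ S15 k ∧ ∀ x : Fin 3 → ℝ, Φdual x v ∈ S15 k}

lemma kdual_eq (x y : Fin 3 → ℝ) (v : Fin 4 → ℝ) :
    κdual x y v = fun i => if i = 1 then -(2 * (x 0 * y 1 - x 1 * y 0)) * v 3 else 0 := by
  funext i
  simp only [κdual, κH, Matrix.transpose_smul, Matrix.mulVec_smul, Pi.neg_apply, Pi.smul_apply]
  rw [Matrix.mulVec]
  simp only [Matrix.transpose_apply, Matrix.single, Matrix.of_apply, dotProduct]
  fin_cases i <;> simp [Fin.sum_univ_four] <;> ring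

lemma S0_eq : S15 0 = {v | v 3 = 0} := by
  ext v
  constructor
  · intro h
    have := congrFun (h ![1,0,0] ![0,1,0]) 1
    rw [kdual_eq] at this
    simp at this
    simpa using this
  · intro (hv : v 3 = 0) x y
    funext i
    rw [kdual_eq]
    simp [hv]

lemma phidual3 (x : Fin 3 → ℝ) (v : Fin 4 → ℝ) : Φdual x v 3 = -(x 0 * v 3) := by
  simp only [Φdual, Pi.neg_apply, Matrix.mulVec, dotProduct, Matrix.transpose_apply, αH]
  simp [Fin.sum_univ_four]

lemma inv0 : ∀ v ∈ S15 0, ∀ x : Fin 3 → ℝ, Φdual x v ∈ S15 0 := by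
  intro v hv x
  rw [S0_eq] at hv ⊢
  rw [Set.mem_setOf_eq, phidual3, hv]
  ring

theorem stmt15 :
    S15 0 = {v | v 3 = 0} ∧
    (∀ v ∈ S15 0, ∀ x : Fin 3 → ℝ, Φdual x v ∈ S15 0) ∧
    (∀ k : ℕ, S15 k = {v | v 3 = 0}) := by
  refine ⟨S0_eq, inv0, ?_⟩
  intro k
  induction k with
  | zero => exact S0_eq
  | succ k ih =>
    ext v
    simp only [S15, Set.mem_setOf_eq, ih]
    constructor
    · exact fun h => h.1
    · intro (hv : v 3 = 0)
      refine ⟨hv, fun x => ?_⟩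
      rw [phidual3, hv]; ring
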